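/- Let z > 0 be real and n ≥ 0, k ≥ 1 be integers. Then the k-th derivative of ν ↦ J_ν(z) at ν = n equals k!·(z/2)^n · ∑_{m=0}^∞ [(−z²/4)^m/(m!·(m+n)!)] · ∑_{k₁=0}^{k} ([log(z/2)]^{k₁}/k₁!) · ∑_{k₂=0}^{k−k₁} (−1)^{k−k₁−k₂} · c_{k₂+1} · Ĥ_{m+n}^{(k−k₁−k₂)}. -/

import Mathlib

open scoped BigOperators

/-- The reciprocal of the complex Gamma function, an entire function
(Mathlib's `Complex.Gamma` vanishes at nonpositive integers, so the inverse is `0` there). -/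
noncomputable def Grec (t : ℂ) : ℂ := (Complex.Gamma t)⁻¹

/-- `G k t` is the `k`-th derivative of the reciprocal Gamma function at `t`. -/
noncomputable def G (k : ℕ) (t : ℂ) : ℂ := iteratedDeriv k Grec t

/-- The Maclaurin coefficients of `1/Γ`: `c j = G^{(j)}(0)/j!`. -/
noncomputable def mcCoeff (j : ℕ) : ℂ := iteratedDeriv j Grec 0 / (j.factorial : ℂ)

/-- Bessel function of the first kind `J_ν(z)` for real `z > 0` and complex order `ν`,
with `(z/2)^ν = exp (ν log (z/2))`. -/
noncomputable def besselJ (z : ℝ) (ν : ℂ) : ℂ :=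
  Complex.exp (ν * Complex.log ((z : ℂ) / 2)) *
    ∑' m : ℕ, (-(z : ℂ) ^ 2 / 4) ^ m / ((m.factorial : ℂ) * Complex.Gamma (ν + 1 + m))

/-- Pochhammer symbol `(t)_m = t (t+1) ⋯ (t+m-1)`. -/
noncomputable def poch (t : ℂ) (m : ℕ) : ℂ := ∏ i ∈ Finset.range m, (t + i)

/-- `P m k t = (1/k!) dᵏ/dtᵏ (t)_m`. -/
noncomputable def P (m k : ℕ) (t : ℂ) : ℂ :=
  ((k.factorial : ℂ))⁻¹ * iteratedDeriv k (fun s => poch s m) t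

/-- `Q m k t = (1/k!) dᵏ/dtᵏ (1/(t)_m)`. -/
noncomputable def Q (m k : ℕ) (t : ℂ) : ℂ :=
  ((k.factorial : ℂ))⁻¹ * iteratedDeriv k (fun s => (poch s m)⁻¹) t

/-- Signed Stirling numbers of the first kind: `s(n,k)` is the coefficient of `x^k`
in `x(x-1)⋯(x-n+1)`. -/
noncomputable def stirS (n k : ℕ) : ℤ := (descPochhammer ℤ n).coeff k

/-- Modified generalized harmonic numbers `Ĥ_m^{(k)}`. -/
noncomputable def Hhat (m k : ℕ) : ℝ :=
  if m = 0 then (if k = 0 then 1 else 0)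
  else ∑ j ∈ Finset.Icc 1 m, (-1 : ℝ) ^ (j - 1) * (m.choose j) / (j : ℝ) ^ k

/-- Digamma function `ψ = Γ'/Γ`. -/
noncomputable def digamma (t : ℂ) : ℂ := deriv Complex.Gamma t / Complex.Gamma t

open scoped Topology
open Finset Filter

lemma grec_diff : Differentiable ℂ Grec := Complex.differentiable_one_div_Gamma

lemma grec_succ (s : ℂ) : Grec s = s * Grec (s + 1) := by
  rcases eq_or_ne s 0 with rfl | hs
  · simp [Grec, Complex.Gamma_zero]
  · rw [Grec, Grec, Complex.Gamma_add_one s hs, mul_inv, ← mul_assoc, mul_inv_cancel₀ hs, one_mul]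

/-- iterated derivative of a constant -/
lemma itD_const (c : ℂ) (i : ℕ) :
    iteratedDeriv i (fun _ : ℂ => c) = fun _ => if i = 0 then c else 0 := by
  induction i generalizing c with
  | zero => simp
  | succ i ih =>
    rw [iteratedDeriv_succ', deriv_const']
    rw [show (fun _ : ℂ => (0:ℂ)) = fun _ : ℂ => (0:ℂ) from rfl, ih 0]
    simp

lemma itD_id (i : ℕ) :
    iteratedDeriv i (fun y : ℂ => y) = fun y => if i = 0 then y else if i = 1 then 1 else 0 := by
  match i with
  | 0 => simp
  | 1 => rw [iteratedDeriv_one]; simp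
  | (j+2) =>
    rw [iteratedDeriv_succ', deriv_id'', itD_const]
    simp

lemma diffOn_iteratedDeriv {f : ℂ → ℂ} {s : Set ℂ} (hf : DifferentiableOn ℂ f s)
    (hs : IsOpen s) (j : ℕ) : DifferentiableOn ℂ (iteratedDeriv j f) s := by
  induction j with
  | zero => simpa using hf
  | succ j ih =>
    rw [iteratedDeriv_succ]
    exact ((ih.analyticOnNhd hs).deriv).differentiableOn

lemma iteratedDeriv_mul_of_isOpen {f g : ℂ → ℂ} {s : Set ℂ} (hs : IsOpen s)
    (hf : DifferentiableOn ℂ f s) (hg : DifferentiableOn ℂ g s) (k : ℕ) :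
    ∀ x ∈ s, iteratedDeriv k (fun y => f y * g y) x =
      ∑ i ∈ range (k + 1), (k.choose i : ℂ) * iteratedDeriv i f x * iteratedDeriv (k - i) g x := by
  induction k with
  | zero => intro x hx; simp
  | succ k ih =>
    intro x hx
    have hdf : ∀ j, DifferentiableOn ℂ (iteratedDeriv j f) s := diffOn_iteratedDeriv hf hs
    have hdg : ∀ j, DifferentiableOn ℂ (iteratedDeriv j g) s := diffOn_iteratedDeriv hg hs
    have heq : iteratedDeriv k (fun y => f y * g y) =ᶠ[𝓝 x]
        fun y => ∑ i ∈ range (k + 1),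
          (k.choose i : ℂ) * iteratedDeriv i f y * iteratedDeriv (k - i) g y := by
      filter_upwards [hs.mem_nhds hx] with y hy using ih y hy
    rw [iteratedDeriv_succ, heq.deriv_eq]
    have hdAt : ∀ (j : ℕ) (h : ℂ → ℂ), DifferentiableOn ℂ h s →
        DifferentiableAt ℂ (iteratedDeriv j h) x := fun j h hh =>
      ((diffOn_iteratedDeriv hh hs j) x hx).differentiableAt (hs.mem_nhds hx)
    rw [deriv_fun_sum (fun i _ => by
      exact ((((hdAt i f hf).const_mul _)).mul (hdAt (k - i) g hg)))]
    have hterm : ∀ i ∈ range (k + 1),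
        deriv (fun y => (k.choose i : ℂ) * iteratedDeriv i f y * iteratedDeriv (k - i) g y) x =
        (k.choose i : ℂ) * (iteratedDeriv (i+1) f x * iteratedDeriv (k - i) g x
          + iteratedDeriv i f x * iteratedDeriv (k - i + 1) g x) := by
      intro i _
      rw [show (fun y => (k.choose i : ℂ) * iteratedDeriv i f y * iteratedDeriv (k - i) g y)
            = fun y => (k.choose i : ℂ) * (iteratedDeriv i f y * iteratedDeriv (k - i) g y) by
          funext y; ring]
      rw [deriv_const_mul _ ((hdAt i f hf).fun_mul (hdAt (k-i) g hg)),
        deriv_fun_mul (hdAt i f hf) (hdAt (k-i) g hg), ← iteratedDeriv_succ, ← iteratedDeriv_succ]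
    rw [Finset.sum_congr rfl hterm]
    -- now pure algebra
    have key : ∀ (A B : ℕ → ℂ),
        ∑ i ∈ range (k + 1), (k.choose i : ℂ) * (A (i+1) * B (k - i) + A i * B (k - i + 1)) =
        ∑ i ∈ range (k + 2), ((k+1).choose i : ℂ) * A i * B (k + 1 - i) := by
      intro A B
      have h1 : ∀ i ∈ range (k + 1), (k.choose i : ℂ) * (A (i+1) * B (k - i) + A i * B (k - i + 1))
          = (k.choose i : ℂ) * A (i+1) * B (k - i) + (k.choose i : ℂ) * A i * B (k + 1 - i) := by
        intro i hi
        rw [Finset.mem_range] at hi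
        have : k - i + 1 = k + 1 - i := by omega
        rw [this]; ring
      rw [Finset.sum_congr rfl h1, Finset.sum_add_distrib]
      rw [Finset.sum_range_succ' (fun i => ((k+1).choose i : ℂ) * A i * B (k + 1 - i)) (k+1)]
      have h2 : ∀ i ∈ range (k + 1), ((k+1).choose (i+1) : ℂ) * A (i+1) * B (k + 1 - (i+1))
          = (k.choose i : ℂ) * A (i+1) * B (k - i) + (k.choose (i+1) : ℂ) * A (i+1) * B (k - i) := by
        intro i hi
        have : k + 1 - (i+1) = k - i := by omega
        rw [this, Nat.choose_succ_succ, Nat.cast_add]; ring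
      rw [Finset.sum_congr rfl h2, Finset.sum_add_distrib]
      have h3 : ∑ i ∈ range (k + 1), (k.choose (i+1) : ℂ) * A (i+1) * B (k - i)
          + (((k+1).choose 0 : ℕ) : ℂ) * A 0 * B (k + 1 - 0)
          = ∑ i ∈ range (k + 1), (k.choose i : ℂ) * A i * B (k + 1 - i) := by
        rw [Finset.sum_range_succ (fun i => (k.choose (i+1) : ℂ) * A (i+1) * B (k - i)) k]
        simp only [Nat.choose_succ_self, Nat.cast_zero, zero_mul, add_zero, Nat.choose_zero_right]
        rw [Finset.sum_range_succ' (fun i => (k.choose i : ℂ) * A i * B (k + 1 - i)) k]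
        have : ∀ i ∈ range k, (k.choose (i+1) : ℂ) * A (i+1) * B (k - i)
            = (k.choose (i+1) : ℂ) * A (i+1) * B (k + 1 - (i+1)) := by
          intro i hi; rw [Finset.mem_range] at hi
          congr 2
          omega
        rw [Finset.sum_congr rfl this]
        simp
      rw [← h3]; ring
    rw [key (fun j => iteratedDeriv j f x) (fun j => iteratedDeriv j g x)]

/-- local additivity -/
lemma iteratedDeriv_add_of_isOpen {f g : ℂ → ℂ} {s : Set ℂ} (hs : IsOpen s)
    (hf : DifferentiableOn ℂ f s) (hg : DifferentiableOn ℂ g s) (k : ℕ) :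
    ∀ x ∈ s, iteratedDeriv k (fun y => f y + g y) x =
      iteratedDeriv k f x + iteratedDeriv k g x := by
  induction k with
  | zero => intro x hx; simp
  | succ k ih =>
    intro x hx
    have heq : iteratedDeriv k (fun y => f y + g y) =ᶠ[𝓝 x]
        fun y => iteratedDeriv k f y + iteratedDeriv k g y := by
      filter_upwards [hs.mem_nhds hx] with y hy using ih y hy
    rw [iteratedDeriv_succ, heq.deriv_eq, deriv_fun_add
      (((diffOn_iteratedDeriv hf hs k) x hx).differentiableAt (hs.mem_nhds hx))
      (((diffOn_iteratedDeriv hg hs k) x hx).differentiableAt (hs.mem_nhds hx)),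
      ← iteratedDeriv_succ, ← iteratedDeriv_succ]

lemma iteratedDeriv_const_mul_of_isOpen {f : ℂ → ℂ} {s : Set ℂ} (hs : IsOpen s)
    (hf : DifferentiableOn ℂ f s) (c : ℂ) (k : ℕ) :
    ∀ x ∈ s, iteratedDeriv k (fun y => c * f y) x = c * iteratedDeriv k f x := by
  induction k with
  | zero => intro x hx; simp
  | succ k ih =>
    intro x hx
    have heq : iteratedDeriv k (fun y => c * f y) =ᶠ[𝓝 x]
        fun y => c * iteratedDeriv k f y := by
      filter_upwards [hs.mem_nhds hx] with y hy using ih y hy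
    rw [iteratedDeriv_succ, heq.deriv_eq, deriv_const_mul c
      (((diffOn_iteratedDeriv hf hs k) x hx).differentiableAt (hs.mem_nhds hx)),
      ← iteratedDeriv_succ]

lemma iteratedDeriv_fsum_of_isOpen {ι : Type*} {u : Finset ι} {h : ι → ℂ → ℂ} {s : Set ℂ}
    (hs : IsOpen s) (hh : ∀ i ∈ u, DifferentiableOn ℂ (h i) s) (k : ℕ) :
    ∀ x ∈ s, iteratedDeriv k (fun y => ∑ i ∈ u, h i y) x =
      ∑ i ∈ u, iteratedDeriv k (h i) x := by
  classical
  induction u using Finset.induction_on with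
  | empty => intro x hx; simp [itD_const]
  | insert a u hne ih =>
    intro x hx
    rw [show (fun y => ∑ i ∈ insert a u, h i y) = fun y => h a y + ∑ i ∈ u, h i y by
      funext y; rw [Finset.sum_insert hne]]
    rw [iteratedDeriv_add_of_isOpen hs (hh a (mem_insert_self a u))
      (DifferentiableOn.fun_sum fun i hi => hh i (mem_insert_of_mem hi)) k x hx,
      Finset.sum_insert hne, ih (fun i hi => hh i (mem_insert_of_mem hi)) x hx]

/-- D1: derivatives of `Grec (t+1)` at 0 give the Maclaurin coefficients. -/
lemma itD_grec_shift (a : ℕ) :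
    iteratedDeriv a (fun t : ℂ => Grec (t + 1)) 0 = (a.factorial : ℂ) * mcCoeff (a + 1) := by
  have hg : Differentiable ℂ (fun t : ℂ => Grec (t + 1)) :=
    grec_diff.comp (differentiable_id.add_const 1)
  have key : iteratedDeriv (a + 1) Grec 0
      = ((a : ℂ) + 1) * iteratedDeriv a (fun t : ℂ => Grec (t + 1)) 0 := by
    have h1 : iteratedDeriv (a+1) Grec 0
        = iteratedDeriv (a+1) (fun t : ℂ => t * Grec (t + 1)) 0 := by
      congr 1; funext t; exact grec_succ t
    rw [h1, iteratedDeriv_mul_of_isOpen isOpen_univ differentiable_fun_id.differentiableOn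
      hg.differentiableOn (a+1) 0 (Set.mem_univ 0)]
    rw [Finset.sum_eq_single 1]
    · rw [itD_id]
      norm_num
    · intro i hi hne
      rw [itD_id]
      rcases Nat.eq_zero_or_pos i with rfl | hpos
      · simp
      · have : ¬ (i = 0) := by omega
        simp [this, hne]
    · intro h; exact absurd (by simp : 1 ∈ range (a+1+1)) h
  have hmc : mcCoeff (a+1) = iteratedDeriv (a+1) Grec 0 / ((a+1).factorial : ℂ) := rfl
  set X := iteratedDeriv a (fun t : ℂ => Grec (t + 1)) 0 with hX
  have h1 : ((a:ℂ) + 1) ≠ 0 := Nat.cast_add_one_ne_zero a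
  have h2 : ((a.factorial : ℕ) : ℂ) ≠ 0 := Nat.cast_ne_zero.mpr (Nat.factorial_ne_zero _)
  rw [hmc, key, Nat.factorial_succ, Nat.cast_mul, mul_div_assoc']
  push_cast
  rw [eq_div_iff (mul_ne_zero h1 h2)]
  ring

/-- D2: iterated derivatives of `(t+c)⁻¹`. -/
lemma itD_inv_shift (c : ℂ) (b : ℕ) :
    ∀ t : ℂ, t + c ≠ 0 → iteratedDeriv b (fun y => (y + c)⁻¹) t
      = (-1) ^ b * (b.factorial : ℂ) * ((t + c)⁻¹) ^ (b + 1) := by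
  induction b with
  | zero => intro t ht; simp
  | succ b ih =>
    intro t ht
    have hopen : IsOpen {y : ℂ | y + c ≠ 0} :=
      isOpen_compl_singleton.preimage (continuous_id.add continuous_const)
    have heq : iteratedDeriv b (fun y => (y + c)⁻¹) =ᶠ[𝓝 t]
        fun y => (-1) ^ b * (b.factorial : ℂ) * ((y + c)⁻¹) ^ (b + 1) := by
      filter_upwards [hopen.mem_nhds ht] with y hy using ih y hy
    rw [iteratedDeriv_succ, heq.deriv_eq]
    have h1 : HasDerivAt (fun y : ℂ => y + c) 1 t := (hasDerivAt_id t).add_const c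
    have h2 : HasDerivAt (fun y : ℂ => (y + c)⁻¹) (-1 / (t + c) ^ 2) t := by
      simpa using h1.fun_inv ht
    have h3 : HasDerivAt (fun y : ℂ => ((y + c)⁻¹) ^ (b + 1))
        (((b:ℂ) + 1) * ((t + c)⁻¹) ^ b * (-1 / (t + c) ^ 2)) t := by
      have := h2.fun_pow (b + 1)
      simpa using this
    rw [((h3.const_mul ((-1 : ℂ) ^ b * (b.factorial : ℂ)))).deriv]
    rw [Nat.factorial_succ]
    push_cast
    have hinv : (-1 : ℂ) / (t + c) ^ 2 = -((t + c)⁻¹) ^ 2 := by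
      rw [neg_div, one_div, inv_pow]
    rw [hinv]
    ring

/-- weights for the partial fraction decomposition -/
noncomputable def pfw (N i : ℕ) : ℂ := (-1) ^ i / ((i.factorial : ℂ) * ((N - 1 - i).factorial : ℂ))

lemma alt_sum_fac {N : ℕ} (hN : 1 ≤ N) :
    ∑ i ∈ range (N + 1), (-1 : ℂ) ^ i / ((i.factorial : ℂ) * ((N - i).factorial : ℂ)) = 0 := by
  have hZ : (∑ i ∈ range (N + 1), (-1 : ℤ) ^ i * N.choose i) = 0 := by
    rw [Int.alternating_sum_range_choose]
    simp [Nat.one_le_iff_ne_zero.mp hN]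
  have hterm : ∀ i ∈ range (N + 1),
      (-1 : ℂ) ^ i / ((i.factorial : ℂ) * ((N - i).factorial : ℂ))
      = ((N.factorial : ℂ))⁻¹ * (((-1 : ℤ) ^ i * N.choose i : ℤ) : ℂ) := by
    intro i hi
    rw [Finset.mem_range] at hi
    have hle : i ≤ N := by omega
    have hfac : (N.choose i) * i.factorial * (N - i).factorial = N.factorial :=
      Nat.choose_mul_factorial_mul_factorial hle
    have hfacC : ((N.choose i : ℂ)) * (i.factorial : ℂ) * ((N - i).factorial : ℂ)
        = (N.factorial : ℂ) := by exact_mod_cast congrArg (Nat.cast (R := ℂ)) hfac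
    have h1 : (i.factorial : ℂ) ≠ 0 := Nat.cast_ne_zero.mpr (Nat.factorial_ne_zero _)
    have h2 : ((N - i).factorial : ℂ) ≠ 0 := Nat.cast_ne_zero.mpr (Nat.factorial_ne_zero _)
    have h3 : (N.factorial : ℂ) ≠ 0 := Nat.cast_ne_zero.mpr (Nat.factorial_ne_zero _)
    rw [eq_comm, inv_mul_eq_div, div_eq_div_iff h3 (mul_ne_zero h1 h2)]
    push_cast
    rw [← hfacC]
    ring
  rw [Finset.sum_congr rfl hterm, ← Finset.mul_sum, ← Int.cast_sum, hZ]
  simp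

lemma pfw_succ {N i : ℕ} (hi : i < N) : pfw N i * ((N:ℂ) - i)⁻¹ = pfw (N+1) i := by
  have h1 : ((N:ℂ) - i) = ((N - i : ℕ) : ℂ) := by rw [Nat.cast_sub hi.le]
  have h2 : (N - i) = (N - 1 - i) + 1 := by omega
  rw [pfw, pfw, show (N+1) - 1 - i = N - i from by omega, h1, h2, Nat.factorial_succ]
  have hi1 : ((i.factorial : ℕ):ℂ) ≠ 0 := Nat.cast_ne_zero.mpr (Nat.factorial_ne_zero _)
  have hi2 : (((N-1-i).factorial : ℕ):ℂ) ≠ 0 := Nat.cast_ne_zero.mpr (Nat.factorial_ne_zero _)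
  have hi3 : ((N-1-i : ℕ):ℂ) + 1 ≠ 0 := Nat.cast_add_one_ne_zero _
  push_cast
  field_simp

lemma pfw_sum {N : ℕ} (hN : 1 ≤ N) : ∑ i ∈ range (N+1), pfw (N+1) i = 0 := by
  rw [← alt_sum_fac hN]
  refine Finset.sum_congr rfl fun i hi => ?_
  rw [pfw, show (N+1) - 1 - i = N - i from by omega]

lemma partial_frac (N : ℕ) (hN1 : 1 ≤ N) : ∀ t : ℂ, (∀ i ∈ range N, t + (i:ℂ) + 1 ≠ 0) →
    ∏ i ∈ range N, (t + (i:ℂ) + 1)⁻¹ = ∑ i ∈ range N, pfw N i * (t + (i:ℂ) + 1)⁻¹ := by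
  induction N, hN1 using Nat.le_induction with
  | base =>
    intro t _
    simp [pfw]
  | succ N hN ih =>
    intro t ht
    have htN : ∀ i ∈ range N, t + (i:ℂ) + 1 ≠ 0 := fun i hi =>
      ht i (Finset.mem_range.mpr (by have := Finset.mem_range.mp hi; omega))
    have hbN : t + (N:ℂ) + 1 ≠ 0 := ht N (Finset.mem_range.mpr (by omega))
    rw [Finset.prod_range_succ, ih t htN, Finset.sum_mul]
    have key2 : ∀ i ∈ range N, pfw N i * (t + (i:ℂ) + 1)⁻¹ * (t + (N:ℂ) + 1)⁻¹
        = pfw (N+1) i * (t + (i:ℂ) + 1)⁻¹ - pfw (N+1) i * (t + (N:ℂ) + 1)⁻¹ := by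
      intro i hi
      have hi' : i < N := Finset.mem_range.mp hi
      have ha : t + (i:ℂ) + 1 ≠ 0 := htN i hi
      have hNi : ((N:ℂ) - i) ≠ 0 := by
        rw [← Nat.cast_sub hi'.le]
        exact Nat.cast_ne_zero.mpr (by omega)
      have hsplit : (t + (i:ℂ) + 1)⁻¹ * (t + (N:ℂ) + 1)⁻¹
          = ((N:ℂ) - i)⁻¹ * ((t + (i:ℂ) + 1)⁻¹ - (t + (N:ℂ) + 1)⁻¹) := by
        field_simp
        ring
      calc pfw N i * (t + (i:ℂ) + 1)⁻¹ * (t + (N:ℂ) + 1)⁻¹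
          = (pfw N i * ((N:ℂ) - i)⁻¹) * ((t + (i:ℂ) + 1)⁻¹ - (t + (N:ℂ) + 1)⁻¹) := by
            rw [mul_assoc, hsplit]; ring
        _ = pfw (N+1) i * (t + (i:ℂ) + 1)⁻¹ - pfw (N+1) i * (t + (N:ℂ) + 1)⁻¹ := by
            rw [pfw_succ hi']; ring
    rw [Finset.sum_congr rfl key2, Finset.sum_sub_distrib, ← Finset.sum_mul]
    have hlast : ∑ i ∈ range N, pfw (N+1) i = - pfw (N+1) N := by
      have := pfw_sum hN
      rw [Finset.sum_range_succ] at this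
      linear_combination this
    rw [hlast, Finset.sum_range_succ]
    ring

lemma hhat_term {N i b : ℕ} (hi : i < N) :
    pfw N i * (((i:ℂ) + 1)⁻¹) ^ (b + 1)
      = ((((-1:ℝ) ^ i * (N.choose (1+i)) / ((1+i:ℕ) : ℝ) ^ b : ℝ)) : ℂ) / (N.factorial : ℂ) := by
  have hchoose : (N.choose (i+1)) * (i+1).factorial * (N - 1 - i).factorial = N.factorial := by
    have := Nat.choose_mul_factorial_mul_factorial (show i+1 ≤ N by omega)
    rwa [show N - (i+1) = N - 1 - i from by omega] at this
  have hC : ((N.choose (i+1) : ℂ)) * (((i+1).factorial : ℕ) : ℂ) * (((N - 1 - i).factorial : ℕ) : ℂ)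
      = ((N.factorial : ℕ) : ℂ) := by exact_mod_cast congrArg (Nat.cast (R := ℂ)) hchoose
  have h1 : ((i.factorial : ℕ) : ℂ) ≠ 0 := Nat.cast_ne_zero.mpr (Nat.factorial_ne_zero _)
  have h2 : (((N-1-i).factorial : ℕ) : ℂ) ≠ 0 := Nat.cast_ne_zero.mpr (Nat.factorial_ne_zero _)
  have h4 : ((i:ℂ) + 1) ≠ 0 := Nat.cast_add_one_ne_zero i
  have hc0 : ((N.choose (i+1) : ℕ) : ℂ) ≠ 0 :=
    Nat.cast_ne_zero.mpr (Nat.choose_pos (show i+1 ≤ N by omega)).ne'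
  have h3 : ((N.factorial : ℕ) : ℂ) ≠ 0 := Nat.cast_ne_zero.mpr (Nat.factorial_ne_zero _)
  rw [pfw, div_mul_eq_mul_div, div_eq_div_iff (mul_ne_zero h1 h2) h3]
  rw [show 1 + i = i + 1 from by omega]
  push_cast
  rw [← hC, Nat.factorial_succ]
  push_cast
  rw [inv_pow]
  have h4 : ((i:ℂ) + 1) ≠ 0 := Nat.cast_add_one_ne_zero i
  have h5 : ((i:ℂ) + 1) ^ (b+1) ≠ 0 := pow_ne_zero _ h4
  have h6 : ((i:ℂ) + 1) ^ b ≠ 0 := pow_ne_zero _ h4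
  field_simp
  ring

lemma hhat_sum (N b : ℕ) (hN : 1 ≤ N) :
    ∑ i ∈ range N, pfw N i * (((i:ℂ) + 1)⁻¹) ^ (b+1)
      = ((Hhat N b : ℝ) : ℂ) / (N.factorial : ℂ) := by
  rw [Hhat, if_neg (by omega)]
  rw [← Finset.Ico_add_one_right_eq_Icc, Finset.sum_Ico_eq_sum_range]
  push_cast [Finset.sum_div]
  refine Finset.sum_congr rfl fun i hi => ?_
  have hi' : i < N := Finset.mem_range.mp hi
  rw [hhat_term hi']
  rw [show 1 + i - 1 = i from by omega]
  push_cast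
  ring

lemma itD_prod_inv (N b : ℕ) (hN : 1 ≤ N) :
    iteratedDeriv b (fun t : ℂ => ∏ i ∈ range N, (t + (i:ℂ) + 1)⁻¹) 0
      = (-1)^b * (b.factorial : ℂ) * (((Hhat N b : ℝ) : ℂ) / (N.factorial : ℂ)) := by
  set s : Set ℂ := Metric.ball 0 1 with hsdef
  have hs : IsOpen s := Metric.isOpen_ball
  have h0 : (0:ℂ) ∈ s := Metric.mem_ball_self one_pos
  have hne : ∀ t ∈ s, ∀ i : ℕ, t + (i:ℂ) + 1 ≠ 0 := by
    intro t ht i h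
    have h2 : t = -((i:ℂ) + 1) := by linear_combination h
    rw [hsdef, Metric.mem_ball, dist_zero_right, h2, norm_neg] at ht
    have h3 : ‖(i:ℂ) + 1‖ = (i:ℝ) + 1 := by
      rw [show (i:ℂ)+1 = ((i+1 : ℕ):ℂ) by push_cast; ring, Complex.norm_natCast]
      push_cast; ring
    rw [h3] at ht
    have := Nat.cast_nonneg (α := ℝ) i
    linarith
  have hdiff : ∀ i : ℕ, DifferentiableOn ℂ (fun t : ℂ => (t + (i:ℂ) + 1)⁻¹) s := by
    intro i
    exact DifferentiableOn.inv
      (((differentiable_id.add_const ((i:ℂ))).add_const 1).differentiableOn)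
      (fun t ht => hne t ht i)
  have heq : (fun t : ℂ => ∏ i ∈ range N, (t + (i:ℂ) + 1)⁻¹) =ᶠ[𝓝 0]
      fun t => ∑ i ∈ range N, pfw N i * (t + (i:ℂ) + 1)⁻¹ := by
    filter_upwards [hs.mem_nhds h0] with t ht
    exact partial_frac N hN t (fun i _ => hne t ht i)
  rw [heq.iteratedDeriv_eq]
  rw [iteratedDeriv_fsum_of_isOpen hs
    (fun i _ => DifferentiableOn.const_mul (hdiff i) (pfw N i)) b 0 h0]
  have hterm : ∀ i ∈ range N, iteratedDeriv b (fun t : ℂ => pfw N i * (t + (i:ℂ) + 1)⁻¹) 0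
      = pfw N i * ((-1)^b * (b.factorial : ℂ) * (((i:ℂ)+1)⁻¹)^(b+1)) := by
    intro i _
    rw [iteratedDeriv_const_mul_of_isOpen hs (hdiff i) (pfw N i) b 0 h0]
    congr 1
    have hfe : (fun t : ℂ => (t + (i:ℂ) + 1)⁻¹) = fun t => (t + ((i:ℂ)+1))⁻¹ := by
      funext t; rw [add_assoc]
    rw [hfe, itD_inv_shift ((i:ℂ)+1) b 0 (by rw [zero_add]; exact Nat.cast_add_one_ne_zero i),
      zero_add]
  rw [Finset.sum_congr rfl hterm, ← hhat_sum N b hN, Finset.mul_sum]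
  exact Finset.sum_congr rfl fun i _ => by ring

lemma grec_prod (N : ℕ) (t : ℂ) :
    Grec (t + 1) = (∏ i ∈ range N, (t + (i:ℂ) + 1)) * Grec (t + ((N:ℂ) + 1)) := by
  induction N with
  | zero => simp
  | succ N ih =>
    rw [Finset.prod_range_succ, ih, grec_succ (t + ((N:ℂ)+1))]
    push_cast
    rw [show t + ((N:ℂ)+1) + 1 = t + ((N:ℂ)+1+1) from by ring]
    ring

/-- The key identity: derivatives of `1/Γ` at positive integers. -/
lemma star_identity (N j : ℕ) : iteratedDeriv j Grec ((N:ℂ) + 1) =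
    ((j.factorial : ℂ) / (N.factorial : ℂ)) *
      ∑ k2 ∈ range (j+1), (-1)^(j-k2) * mcCoeff (k2+1) * ((Hhat N (j-k2) : ℝ) : ℂ) := by
  have hshift : iteratedDeriv j Grec ((N:ℂ)+1)
      = iteratedDeriv j (fun t : ℂ => Grec (t + ((N:ℂ)+1))) 0 := by
    rw [iteratedDeriv_comp_add_const]
    simp
  rcases Nat.eq_zero_or_pos N with rfl | hN
  · rw [hshift]
    have hfe : (fun t : ℂ => Grec (t + (((0:ℕ):ℂ)+1))) = fun t : ℂ => Grec (t + 1) := by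
      funext t; norm_num
    rw [hfe, itD_grec_shift j]
    rw [Finset.sum_eq_single j]
    · simp [Hhat]
    · intro k2 hk2 hne
      have : j - k2 ≠ 0 := by
        rw [Finset.mem_range] at hk2; omega
      simp [Hhat, this]
    · intro h; exact absurd (Finset.self_mem_range_succ j) h
  rw [hshift]
  set s : Set ℂ := Metric.ball 0 1 with hsdef
  have hs : IsOpen s := Metric.isOpen_ball
  have h0 : (0:ℂ) ∈ s := Metric.mem_ball_self one_pos
  have hne : ∀ t ∈ s, ∀ i : ℕ, t + (i:ℂ) + 1 ≠ 0 := by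
    intro t ht i h
    have h2 : t = -((i:ℂ) + 1) := by linear_combination h
    rw [hsdef, Metric.mem_ball, dist_zero_right, h2, norm_neg] at ht
    have h3 : ‖(i:ℂ) + 1‖ = (i:ℝ) + 1 := by
      rw [show (i:ℂ)+1 = ((i+1 : ℕ):ℂ) by push_cast; ring, Complex.norm_natCast]
      push_cast; ring
    rw [h3] at ht
    have := Nat.cast_nonneg (α := ℝ) i
    linarith
  have heq : (fun t : ℂ => Grec (t + ((N:ℂ)+1))) =ᶠ[𝓝 0]
      fun t : ℂ => Grec (t + 1) * ∏ i ∈ range N, (t + (i:ℂ) + 1)⁻¹ := by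
    filter_upwards [hs.mem_nhds h0] with t ht
    have hp : (∏ i ∈ range N, (t + (i:ℂ) + 1)) ≠ 0 :=
      Finset.prod_ne_zero_iff.mpr (fun i _ => hne t ht i)
    rw [Finset.prod_inv_distrib]
    rw [grec_prod N t, eq_comm, mul_comm, ← mul_assoc, inv_mul_cancel₀ hp, one_mul]
  rw [heq.iteratedDeriv_eq]
  have hf : DifferentiableOn ℂ (fun t : ℂ => Grec (t + 1)) s :=
    (grec_diff.comp (differentiable_id.add_const 1)).differentiableOn
  have hg : DifferentiableOn ℂ (fun t : ℂ => ∏ i ∈ range N, (t + (i:ℂ) + 1)⁻¹) s :=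
    DifferentiableOn.fun_finset_prod (fun (i : ℕ) _ => DifferentiableOn.fun_inv
      (((differentiable_id.add_const ((i:ℂ))).add_const 1).differentiableOn)
      (fun t ht => hne t ht i))
  rw [iteratedDeriv_mul_of_isOpen hs hf hg j 0 h0]
  rw [Finset.mul_sum]
  refine Finset.sum_congr rfl fun a ha => ?_
  have ha' : a ≤ j := by rw [Finset.mem_range] at ha; omega
  rw [itD_grec_shift a, itD_prod_inv N (j-a) hN]
  have hfac : (j.choose a) * a.factorial * (j-a).factorial = j.factorial :=
    Nat.choose_mul_factorial_mul_factorial ha'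
  have hfacC : ((j.choose a : ℕ):ℂ) * ((a.factorial : ℕ):ℂ) * (((j-a).factorial : ℕ):ℂ)
      = ((j.factorial : ℕ):ℂ) := by exact_mod_cast congrArg (Nat.cast (R := ℂ)) hfac
  have hNfac : ((N.factorial : ℕ):ℂ) ≠ 0 := Nat.cast_ne_zero.mpr (Nat.factorial_ne_zero _)
  field_simp
  linear_combination mcCoeff (a+1) * ((Hhat N (j-a) : ℝ):ℂ) * hfacC

lemma G_entire (j : ℕ) : Differentiable ℂ (iteratedDeriv j Grec) :=
  differentiableOn_univ.mp (diffOn_iteratedDeriv grec_diff.differentiableOn isOpen_univ j)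

section Conv

variable (z : ℝ) (n : ℕ)

/-- coefficients of the Bessel series -/
noncomputable def bca (z : ℝ) (m : ℕ) : ℂ := (-(z : ℂ) ^ 2 / 4) ^ m / (m.factorial : ℂ)

/-- the entire part of the Bessel function -/
noncomputable def bS (z : ℝ) (ν : ℂ) : ℂ := ∑' m : ℕ, bca z m * Grec (ν + 1 + m)

lemma bca_norm (m : ℕ) : ‖bca z m‖ = (z^2/4)^m / m.factorial := by
  rw [bca, norm_div, norm_pow]
  have h1 : ‖-(z : ℂ) ^ 2 / 4‖ = z^2/4 := by
    rw [norm_div]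
    rw [show -(z:ℂ)^2 = ((-(z^2) : ℝ) : ℂ) by push_cast; ring]
    rw [Complex.norm_real, show (4:ℂ) = ((4:ℝ):ℂ) by norm_num, Complex.norm_real]
    rw [Real.norm_eq_abs, Real.norm_eq_abs]
    rw [abs_of_nonpos (neg_nonpos.mpr (sq_nonneg z))]
    rw [abs_of_nonneg (by norm_num : (0:ℝ) ≤ 4)]
    ring
  rw [h1, Complex.norm_natCast]

lemma hasSum_iteratedDeriv_bS (j : ℕ) :
    HasSum (fun m : ℕ => bca z m * iteratedDeriv j Grec ((n:ℂ) + 1 + m))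
      (iteratedDeriv j (bS z) (n:ℂ)) ∧ DifferentiableOn ℂ (bS z) (Metric.ball (n:ℂ) (1/2)) := by
  set U : Set ℂ := Metric.ball (n:ℂ) (1/2) with hUdef
  have hU : IsOpen U := Metric.isOpen_ball
  have hn : (n:ℂ) ∈ U := Metric.mem_ball_self (by norm_num)
  -- uniform bound for the terms
  obtain ⟨C₀, hC₀⟩ := (isCompact_closedBall (n:ℂ) (1/2)).exists_bound_of_continuousOn
    ((grec_diff.comp (differentiable_id.add_const 1)).continuous.continuousOn)
  have hC₀0 : 0 ≤ C₀ := le_trans (norm_nonneg _)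
    (hC₀ (n:ℂ) (Metric.mem_closedBall_self (by norm_num)))
  have hgb : ∀ m : ℕ, ∀ ν ∈ U, ‖Grec (ν + 1 + m)‖ ≤ C₀ * 2^m / m.factorial := by
    intro m ν hν
    have hfac : ∀ i ∈ range m, ((i:ℝ)+1)/2 ≤ ‖ν + (i:ℂ) + 1‖ := by
      intro i _
      have h1 : ν + (i:ℂ) + 1 = ((n:ℂ) + i + 1) + (ν - n) := by ring
      have h2 : ‖(n:ℂ) + i + 1‖ - ‖ν - n‖ ≤ ‖ν + (i:ℂ) + 1‖ := by
        have h := norm_sub_norm_le ((n:ℂ) + i + 1) (-(ν - (n:ℂ)))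
        rw [norm_neg, sub_neg_eq_add] at h
        rw [h1]
        exact h
      have h3 : ‖(n:ℂ) + i + 1‖ = (n:ℝ) + i + 1 := by
        rw [show (n:ℂ) + i + 1 = ((n + i + 1 : ℕ):ℂ) by push_cast; ring, Complex.norm_natCast]
        push_cast; ring
      have h4 : ‖ν - n‖ < 1/2 := by
        rw [hUdef, Metric.mem_ball, dist_eq_norm] at hν; exact hν
      have h5 : (0:ℝ) ≤ (n:ℝ) := Nat.cast_nonneg n
      rw [h3] at h2
      linarith
    have hprod : ((m.factorial : ℝ)) / 2^m ≤ ‖∏ i ∈ range m, (ν + (i:ℂ) + 1)‖ := by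
      rw [norm_prod]
      calc ((m.factorial : ℝ)) / 2^m = ∏ i ∈ range m, (((i:ℝ)+1)/2) := by
            rw [Finset.prod_div_distrib, Finset.prod_const, Finset.card_range]
            congr 1
            rw [show (m.factorial : ℝ) = ((∏ i ∈ range m, (i+1) : ℕ) : ℝ) by
              rw [Finset.prod_range_add_one_eq_factorial]]
            push_cast; rfl
        _ ≤ ∏ i ∈ range m, ‖ν + (i:ℂ) + 1‖ :=
            Finset.prod_le_prod (fun i _ => by positivity) hfac
    have hid : Grec (ν + 1) = (∏ i ∈ range m, (ν + (i:ℂ) + 1)) * Grec (ν + 1 + m) := by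
      rw [grec_prod m ν]
      congr 1
      ring
    have hb : ‖Grec (ν+1)‖ ≤ C₀ := hC₀ _ (Metric.ball_subset_closedBall hν)
    have hnorm : ‖∏ i ∈ range m, (ν + (i:ℂ) + 1)‖ * ‖Grec (ν + 1 + m)‖ ≤ C₀ := by
      rw [← norm_mul, ← hid]; exact hb
    have hple : ((m.factorial : ℝ)) / 2^m * ‖Grec (ν + 1 + m)‖ ≤ C₀ :=
      le_trans (mul_le_mul_of_nonneg_right hprod (norm_nonneg _)) hnorm
    have h2m : (0:ℝ) < 2^m := by positivity
    have hmf : (0:ℝ) < (m.factorial : ℝ) := by positivity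
    have hple2 : ((m.factorial : ℝ)) * ‖Grec (ν + 1 + m)‖ ≤ C₀ * 2^m := by
      rw [div_mul_eq_mul_div, div_le_iff₀ h2m] at hple; exact hple
    rw [le_div_iff₀ hmf, mul_comm]
    exact hple2
  -- summable majorant
  set u : ℕ → ℝ := fun m => C₀ * ((z^2/2)^m / m.factorial) with hu_def
  have hu : Summable u := (Real.summable_pow_div_factorial (z^2/2)).mul_left C₀
  have hfu : ∀ (m : ℕ), ∀ ν ∈ U, ‖bca z m * Grec (ν + 1 + m)‖ ≤ u m := by
    intro m ν hν
    rw [norm_mul, bca_norm]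
    have h1 := hgb m ν hν
    have hmf1 : (1:ℝ) ≤ (m.factorial : ℝ) :=
      Nat.one_le_cast.mpr (Nat.one_le_iff_ne_zero.mpr (Nat.factorial_ne_zero m))
    have hmf0 : (0:ℝ) < (m.factorial : ℝ) := by positivity
    calc (z^2/4)^m / m.factorial * ‖Grec (ν+1+m)‖
        ≤ (z^2/4)^m / m.factorial * (C₀ * 2^m / m.factorial) :=
          mul_le_mul_of_nonneg_left h1 (by positivity)
      _ = C₀ * ((z^2/2)^m / ((m.factorial:ℝ) * m.factorial)) := by
          rw [show (z^2/2 : ℝ) = (z^2/4)*2 by ring, mul_pow]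
          field_simp
      _ ≤ C₀ * ((z^2/2)^m / ((m.factorial:ℝ))) := by
          gcongr
          nlinarith [hmf1]
  have hbase : TendstoLocallyUniformlyOn
      (fun (t : Finset ℕ) (ν : ℂ) => ∑ m ∈ t, bca z m * Grec (ν + 1 + m)) (bS z) atTop U :=
    (tendstoUniformlyOn_tsum hu hfu).tendstoLocallyUniformlyOn
  have hdF : ∀ (j : ℕ) (t : Finset ℕ), Differentiable ℂ
      (fun ν : ℂ => ∑ m ∈ t, bca z m * iteratedDeriv j Grec (ν + 1 + m)) := by
    intro j t
    apply Differentiable.fun_sum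
    intro m _
    exact (((G_entire j).comp ((differentiable_id.add_const 1).add_const (m:ℂ)))).const_mul _
  have hind : ∀ j : ℕ, TendstoLocallyUniformlyOn
      (fun (t : Finset ℕ) (ν : ℂ) => ∑ m ∈ t, bca z m * iteratedDeriv j Grec (ν + 1 + m))
      (deriv^[j] (bS z)) atTop U := by
    intro j
    induction j with
    | zero => simpa using hbase
    | succ j ih =>
      have h := ih.deriv (Filter.Eventually.of_forall fun t => (hdF j t).differentiableOn) hU
      have hFeq : (deriv ∘ (fun (t : Finset ℕ) (ν : ℂ) =>
            ∑ m ∈ t, bca z m * iteratedDeriv j Grec (ν + 1 + m)))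
          = fun (t : Finset ℕ) (ν : ℂ) =>
            ∑ m ∈ t, bca z m * iteratedDeriv (j+1) Grec (ν + 1 + m) := by
        funext t ν
        have hterm : ∀ m : ℕ, DifferentiableAt ℂ
            (fun ν : ℂ => bca z m * iteratedDeriv j Grec (ν + 1 + m)) ν :=
          fun m => ((((G_entire j).comp
            ((differentiable_id.add_const 1).add_const (m:ℂ)))).const_mul _).differentiableAt
        rw [Function.comp_apply, deriv_fun_sum (fun m _ => hterm m)]
        refine Finset.sum_congr rfl fun m _ => ?_
        have hd : DifferentiableAt ℂ (fun ν : ℂ => iteratedDeriv j Grec (ν + 1 + (m:ℂ))) ν :=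
          (((G_entire j).comp
            ((differentiable_id.add_const 1).add_const (m:ℂ)))).differentiableAt
        rw [deriv_const_mul _ hd]
        congr 1
        have hassoc : (fun ν : ℂ => iteratedDeriv j Grec (ν + 1 + m))
            = fun ν => iteratedDeriv j Grec (ν + (1 + m)) := by
          funext w; rw [add_assoc]
        rw [hassoc, deriv_comp_add_const, ← iteratedDeriv_succ, ← add_assoc]
      rw [hFeq] at h
      rw [Function.iterate_succ_apply' deriv j (bS z)]
      exact h
  constructor
  · have ht := (hind j).tendsto_at hn
    rw [← iteratedDeriv_eq_iterate] at ht
    exact ht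
  · refine hbase.differentiableOn (Filter.Eventually.of_forall fun t => ?_) hU
    have := (hdF 0 t).differentiableOn (s := U)
    simpa using this

end Conv

/-- For `z > 0`, integer `n ≥ 0` and `k ≥ 1`:
`∂ᵏ/∂νᵏ J_ν(z)|_{ν=n} = k! (z/2)ⁿ ∑ₘ (−z²/4)ᵐ/(m!(m+n)!)
∑_{k₁=0}^{k} [log(z/2)]^{k₁}/k₁! ∑_{k₂=0}^{k−k₁} (−1)^{k−k₁−k₂} c_{k₂+1} Ĥ_{m+n}^{(k−k₁−k₂)}`. -/
theorem iteratedDeriv_besselJ_nat (z : ℝ) (hz : 0 < z) (n k : ℕ) (hk : 1 ≤ k) :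
    iteratedDeriv k (fun ν => besselJ z ν) (n : ℂ) =
      (k.factorial : ℂ) * Complex.exp ((n : ℂ) * Complex.log ((z : ℂ) / 2)) *
        ∑' m : ℕ, ((-(z : ℂ) ^ 2 / 4) ^ m / ((m.factorial : ℂ) * ((m + n).factorial : ℂ)) *
          ∑ k1 ∈ Finset.range (k + 1),
            (Complex.log ((z : ℂ) / 2)) ^ k1 / (k1.factorial : ℂ) *
              ∑ k2 ∈ Finset.range (k - k1 + 1),
                (-1) ^ (k - k1 - k2) * mcCoeff (k2 + 1) *
                  ((Hhat (m + n) (k - k1 - k2) : ℝ) : ℂ)) := by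
  set L : ℂ := Complex.log ((z:ℂ)/2) with hLdef
  have hbJ : (fun ν => besselJ z ν) = fun ν : ℂ => Complex.exp (ν * L) * bS z ν := by
    funext ν
    rw [besselJ, bS]
    congr 1
    refine tsum_congr fun m => ?_
    simp only [bca, Grec, div_eq_mul_inv, mul_inv]
    ring
  have hU : IsOpen (Metric.ball ((n:ℂ)) (1/2:ℝ)) := Metric.isOpen_ball
  have hn : ((n:ℂ)) ∈ Metric.ball ((n:ℂ)) (1/2:ℝ) := Metric.mem_ball_self (by norm_num)
  have hconv := fun j => hasSum_iteratedDeriv_bS z n j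
  have hexpdiff : DifferentiableOn ℂ (fun ν : ℂ => Complex.exp (ν * L))
      (Metric.ball ((n:ℂ)) (1/2:ℝ)) :=
    (Complex.differentiable_exp.comp (differentiable_id.mul_const L)).differentiableOn
  rw [hbJ, iteratedDeriv_mul_of_isOpen hU hexpdiff (hconv 0).2 k _ hn]
  have hexp : ∀ (i : ℕ), iteratedDeriv i (fun ν : ℂ => Complex.exp (ν * L))
      = fun ν => L^i * Complex.exp (ν * L) := by
    intro i
    have h1 : (fun ν : ℂ => Complex.exp (ν * L)) = fun ν : ℂ => Complex.exp (L * ν) := by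
      funext w; rw [mul_comm]
    rw [h1, iteratedDeriv_cexp_const_mul]
    funext w; rw [mul_comm L w]
  have hstar : ∀ (j m : ℕ), bca z m * iteratedDeriv j Grec ((n:ℂ) + 1 + m)
      = (j.factorial : ℂ) * ((bca z m / (((m+n).factorial : ℕ):ℂ)) *
          ∑ k2 ∈ range (j+1), (-1)^(j-k2) * mcCoeff (k2+1) * ((Hhat (m+n) (j-k2) : ℝ):ℂ)) := by
    intro j m
    rw [show (n:ℂ) + 1 + (m:ℂ) = (((m+n:ℕ)):ℂ) + 1 by push_cast; ring, star_identity (m+n) j]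
    ring
  have hterm : ∀ k1 ∈ range (k+1), HasSum
      (fun m : ℕ => (-(z:ℂ)^2/4)^m / ((m.factorial:ℂ) * (((m+n).factorial :ℕ):ℂ)) *
        (L^k1 / (k1.factorial : ℂ) * ∑ k2 ∈ range (k - k1 + 1),
          (-1)^(k - k1 - k2) * mcCoeff (k2+1) * ((Hhat (m+n) (k - k1 - k2) : ℝ):ℂ)))
      (L^k1 / ((k1.factorial : ℂ) * (((k-k1).factorial :ℕ):ℂ)) *
        iteratedDeriv (k-k1) (bS z) ((n:ℂ))) := by
    intro k1 _
    have h := ((hconv (k-k1)).1).mul_left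
      (L^k1 / ((k1.factorial : ℂ) * (((k-k1).factorial:ℕ):ℂ)))
    have hfeq : (fun m : ℕ => (L^k1 / ((k1.factorial : ℂ) * (((k-k1).factorial:ℕ):ℂ))) *
        (bca z m * iteratedDeriv (k-k1) Grec ((n:ℂ) + 1 + m)))
        = fun m : ℕ => (-(z:ℂ)^2/4)^m / ((m.factorial:ℂ) * (((m+n).factorial :ℕ):ℂ)) *
        (L^k1 / (k1.factorial : ℂ) * ∑ k2 ∈ range (k - k1 + 1),
          (-1)^(k - k1 - k2) * mcCoeff (k2+1) * ((Hhat (m+n) (k - k1 - k2) : ℝ):ℂ)) := by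
      funext m
      rw [hstar (k-k1) m, bca]
      have h1 : ((k1.factorial:ℕ):ℂ) ≠ 0 := Nat.cast_ne_zero.mpr (Nat.factorial_ne_zero _)
      have h2 : (((k-k1).factorial:ℕ):ℂ) ≠ 0 := Nat.cast_ne_zero.mpr (Nat.factorial_ne_zero _)
      have h3 : ((m.factorial:ℕ):ℂ) ≠ 0 := Nat.cast_ne_zero.mpr (Nat.factorial_ne_zero _)
      have h4 : (((m+n).factorial:ℕ):ℂ) ≠ 0 := Nat.cast_ne_zero.mpr (Nat.factorial_ne_zero _)
      field_simp
    rw [← hfeq]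
    exact h
  have hres : (∑' (m:ℕ), ((-(z:ℂ)^2/4)^m / ((m.factorial:ℂ) * (((m+n).factorial:ℕ):ℂ)) *
        ∑ k1 ∈ range (k+1), L^k1 / (k1.factorial:ℂ) *
          ∑ k2 ∈ range (k - k1 + 1),
            (-1)^(k - k1 - k2) * mcCoeff (k2+1) * ((Hhat (m+n) (k - k1 - k2) : ℝ):ℂ)))
      = ∑ k1 ∈ range (k+1), (L^k1 / ((k1.factorial:ℂ) * (((k-k1).factorial:ℕ):ℂ))) *
          iteratedDeriv (k-k1) (bS z) ((n:ℂ)) := by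
    rw [tsum_congr (fun m => Finset.mul_sum _ _ _)]
    exact (hasSum_sum hterm).tsum_eq
  rw [hres, Finset.mul_sum]
  refine Finset.sum_congr rfl fun k1 hk1 => ?_
  simp only [hexp k1]
  have hle : k1 ≤ k := by rw [Finset.mem_range] at hk1; omega
  have hfac : (k.choose k1) * k1.factorial * (k-k1).factorial = k.factorial :=
    Nat.choose_mul_factorial_mul_factorial hle
  have hfacC : ((k.choose k1 :ℕ):ℂ) * ((k1.factorial:ℕ):ℂ) * (((k-k1).factorial:ℕ):ℂ)
      = ((k.factorial:ℕ):ℂ) := by exact_mod_cast congrArg (Nat.cast (R := ℂ)) hfac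
  have h1 : ((k1.factorial:ℕ):ℂ) ≠ 0 := Nat.cast_ne_zero.mpr (Nat.factorial_ne_zero _)
  have h2 : (((k-k1).factorial:ℕ):ℂ) ≠ 0 := Nat.cast_ne_zero.mpr (Nat.factorial_ne_zero _)
  field_simp
  linear_combination (L^k1 *
    iteratedDeriv (k-k1) (bS z) ((n:ℂ))) * hfacC
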